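/- (Larman–Rogers subgraph bound) Let G = (V,E) be a finite induced subgraph of the unit distance graph in \mathbb{R}^n, i.e. V = \{v_1,\dots,v_M\} \subset \mathbb{R}^n and E consists of the pairs at Euclidean distance 1. Then m_1(\mathbb{R}^n) \leq \alpha(G)/|V|, where m_1(\mathbb{R}^n) is the supremum of densities of Lebesgue measurable subsets of \mathbb{R}^n avoiding distance 1. -/

import Mathlib

open scoped Classical
open MeasureTheory

/-- The independence number of the unit-distance graph induced on a finite set of
points of `ℝⁿ` (edges join points at Euclidean distance 1). -/
noncomputable def indepNum {n : ℕ} (V : Finset (EuclideanSpace ℝ (Fin n))) : ℕ :=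
  (V.powerset.filter (fun A => ∀ u ∈ A, ∀ v ∈ A, dist u v ≠ 1)).sup Finset.card

/-- The (upper) density of a subset of `ℝⁿ`. -/
noncomputable def density (n : ℕ) (S : Set (EuclideanSpace ℝ (Fin n))) : ℝ :=
  Filter.limsup
    (fun R : ℝ => (volume (S ∩ {x : EuclideanSpace ℝ (Fin n) | ∀ i, |x i| ≤ R})).toReal
      / (2*R)^n)
    Filter.atTop

/-- The supremum of densities of measurable sets of `ℝⁿ` avoiding distance 1. -/
noncomputable def m1 (n : ℕ) : ℝ :=
  sSup {d : ℝ | ∃ S : Set (EuclideanSpace ℝ (Fin n)), MeasurableSet S ∧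
    (∀ x ∈ S, ∀ y ∈ S, dist x y ≠ 1) ∧ d = density n S}

open scoped ENNReal

section LRaux

open Filter

variable {n : ℕ}

lemma LR_abs_coord_le_norm (x : EuclideanSpace ℝ (Fin n)) (i : Fin n) : |x i| ≤ ‖x‖ := by
  rw [EuclideanSpace.norm_eq]
  have hle : |x i| ^ 2 ≤ ∑ j, ‖x j‖ ^ 2 := by
    rw [← Real.norm_eq_abs]
    exact Finset.single_le_sum (f := fun j => ‖x j‖ ^ 2) (fun j _ => by positivity)
      (Finset.mem_univ i)
  calc |x i| = Real.sqrt (|x i| ^ 2) := by rw [Real.sqrt_sq_eq_abs, abs_abs]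
    _ ≤ _ := Real.sqrt_le_sqrt hle

lemma LR_box_eq (R : ℝ) :
    {x : EuclideanSpace ℝ (Fin n) | ∀ i, |x i| ≤ R}
      = (MeasurableEquiv.toLp 2 (Fin n → ℝ)).symm ⁻¹'
        (Set.univ.pi fun _ : Fin n => Set.Icc (-R) R) := by
  ext x
  simp [Set.mem_pi, abs_le, MeasurableEquiv.toLp_symm_apply, Pi.le_def,
    forall_and]

lemma LR_box_meas (R : ℝ) :
    MeasurableSet {x : EuclideanSpace ℝ (Fin n) | ∀ i, |x i| ≤ R} := by
  rw [LR_box_eq]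
  exact (MeasurableEquiv.toLp 2 (Fin n → ℝ)).symm.measurable
    (MeasurableSet.univ_pi fun _ => measurableSet_Icc)

lemma LR_box_vol (R : ℝ) (hR : 0 ≤ R) :
    volume {x : EuclideanSpace ℝ (Fin n) | ∀ i, |x i| ≤ R}
      = ENNReal.ofReal (2 * R) ^ n := by
  rw [LR_box_eq, (EuclideanSpace.volume_preserving_symm_measurableEquiv_toLp (Fin n)).measure_preimage
    (MeasurableSet.univ_pi fun _ => measurableSet_Icc).nullMeasurableSet]
  rw [volume_pi_pi]
  simp [Real.volume_Icc]
  congr 1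
  rw [ENNReal.ofReal_add hR hR, two_mul]

lemma LR_card_le (V : Finset (EuclideanSpace ℝ (Fin n))) (S : Set (EuclideanSpace ℝ (Fin n)))
    (hS : ∀ x ∈ S, ∀ y ∈ S, dist x y ≠ 1) (x : EuclideanSpace ℝ (Fin n)) :
    (V.filter fun v => x + v ∈ S).card ≤ indepNum V := by
  apply Finset.le_sup (f := Finset.card)
  simp only [Finset.mem_filter, Finset.mem_powerset]
  refine ⟨Finset.filter_subset _ _, fun u hu v hv => ?_⟩
  have := hS _ hu.2 _ hv.2
  rwa [dist_add_left] at this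

lemma LR_key (V : Finset (EuclideanSpace ℝ (Fin n))) (S : Set (EuclideanSpace ℝ (Fin n)))
    (hSm : MeasurableSet S) (hS : ∀ x ∈ S, ∀ y ∈ S, dist x y ≠ 1)
    (B B' : Set (EuclideanSpace ℝ (Fin n))) (hB' : MeasurableSet B')
    (hBB' : ∀ v ∈ V, (fun x => x + v) ⁻¹' (S ∩ B) ⊆ B') :
    (V.card : ℝ≥0∞) * volume (S ∩ B) ≤ (indepNum V : ℝ≥0∞) * volume B' := by
  have hTm : ∀ v : EuclideanSpace ℝ (Fin n), MeasurableSet ((fun x => x + v) ⁻¹' S) :=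
    fun v => hSm.preimage (measurable_add_const v)
  have h1 : ∀ v ∈ V, volume (S ∩ B) ≤ volume (((fun x => x + v) ⁻¹' S) ∩ B') := by
    intro v hv
    calc volume (S ∩ B) = volume ((fun x => x + v) ⁻¹' (S ∩ B)) :=
          (measure_preimage_add_right volume v _).symm
      _ ≤ volume (((fun x => x + v) ⁻¹' S) ∩ B') := by
          apply measure_mono
          intro x hx
          exact ⟨hx.1, hBB' v hv hx⟩
  calc (V.card : ℝ≥0∞) * volume (S ∩ B)
      = ∑ _v ∈ V, volume (S ∩ B) := by
        rw [Finset.sum_const, nsmul_eq_mul]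
    _ ≤ ∑ v ∈ V, volume (((fun x => x + v) ⁻¹' S) ∩ B') := Finset.sum_le_sum h1
    _ = ∑ v ∈ V, ∫⁻ x in B', ((fun x => x + v) ⁻¹' S).indicator 1 x := by
        refine Finset.sum_congr rfl fun v _ => ?_
        rw [lintegral_indicator_one (hTm v), Measure.restrict_apply (hTm v)]
    _ = ∫⁻ x in B', ∑ v ∈ V, ((fun x => x + v) ⁻¹' S).indicator 1 x :=
        (lintegral_finset_sum _ fun v _ => measurable_const.indicator (hTm v)).symm
    _ ≤ ∫⁻ _x in B', (indepNum V : ℝ≥0∞) := by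
        apply lintegral_mono
        intro x
        have hsum : ∑ v ∈ V, ((fun y => y + v) ⁻¹' S).indicator (1 : EuclideanSpace ℝ (Fin n) → ℝ≥0∞) x
            = ((V.filter fun v => x + v ∈ S).card : ℝ≥0∞) := by
          rw [Finset.card_filter]
          push_cast
          refine Finset.sum_congr rfl fun v _ => ?_
          by_cases h : x + v ∈ S <;> simp [Set.indicator_apply, h]
        show (∑ v ∈ V, ((fun y => y + v) ⁻¹' S).indicator
            (1 : EuclideanSpace ℝ (Fin n) → ℝ≥0∞) x) ≤ (indepNum V : ℝ≥0∞)
        rw [hsum]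
        exact_mod_cast Nat.cast_le.2 (LR_card_le V S hS x)
    _ = (indepNum V : ℝ≥0∞) * volume B' := by
        rw [setLIntegral_const]

end LRaux

theorem larman_rogers_subgraph_bound (n : ℕ)
    (V : Finset (EuclideanSpace ℝ (Fin n))) (hV : V.Nonempty) :
    m1 n ≤ (indepNum V : ℝ) / V.card := by
  have hMnat : 0 < V.card := Finset.card_pos.2 hV
  have hM0 : 0 < (V.card : ℝ) := by exact_mod_cast hMnat
  have hαM : (0:ℝ) ≤ (indepNum V : ℝ) / V.card := by positivity
  apply Real.sSup_le _ hαM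
  rintro d ⟨S, hSm, hSav, rfl⟩
  obtain ⟨v₀, hv₀⟩ := hV
  set c : ℝ := V.sup' ⟨v₀, hv₀⟩ (fun v => ‖v‖) with hcdef
  have hc0 : 0 ≤ c := le_trans (norm_nonneg v₀) (Finset.le_sup' _ hv₀)
  have hcoord : ∀ v ∈ V, ∀ i, |v i| ≤ c := fun v hv i =>
    (LR_abs_coord_le_norm v i).trans (Finset.le_sup' _ hv)
  set α : ℝ := (indepNum V : ℝ) with hαdef
  set M : ℝ := (V.card : ℝ) with hMdef
  -- key real inequality
  have key : ∀ R : ℝ, 0 ≤ R →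
      (volume (S ∩ {x : EuclideanSpace ℝ (Fin n) | ∀ i, |x i| ≤ R})).toReal
        ≤ (α / M) * (2*(R+c))^n := by
    intro R hR
    have hsub : ∀ v ∈ V, (fun x => x + v) ⁻¹'
        (S ∩ {x : EuclideanSpace ℝ (Fin n) | ∀ i, |x i| ≤ R})
        ⊆ {x : EuclideanSpace ℝ (Fin n) | ∀ i, |x i| ≤ R + c} := by
      intro v hv x hx i
      have h1 : |x i + v i| ≤ R := hx.2 i
      have h2 : |v i| ≤ c := hcoord v hv i
      have h3 : |x i + v i - v i| ≤ |x i + v i| + |v i| := abs_sub _ _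
      simp only [add_sub_cancel_right] at h3
      linarith
    have hEN := LR_key V S hSm hSav _ _ (LR_box_meas (R + c)) hsub
    rw [LR_box_vol (R + c) (by linarith)] at hEN
    have hfin : volume (S ∩ {x : EuclideanSpace ℝ (Fin n) | ∀ i, |x i| ≤ R}) ≠ ⊤ := by
      refine ne_top_of_le_ne_top ?_ (measure_mono Set.inter_subset_right)
      rw [LR_box_vol R hR]
      exact ENNReal.pow_ne_top ENNReal.ofReal_ne_top
    have hRHSfin : (indepNum V : ℝ≥0∞) * ENNReal.ofReal (2 * (R + c)) ^ n ≠ ⊤ :=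
      ENNReal.mul_ne_top (ENNReal.natCast_ne_top _) (ENNReal.pow_ne_top ENNReal.ofReal_ne_top)
    have htr := ENNReal.toReal_mono hRHSfin hEN
    rw [ENNReal.toReal_mul, ENNReal.toReal_mul, ENNReal.toReal_pow, ENNReal.toReal_natCast,
      ENNReal.toReal_natCast, ENNReal.toReal_ofReal (by linarith)] at htr
    rw [div_mul_eq_mul_div, le_div_iff₀ hM0, mul_comm]
    exact htr
  -- limsup argument
  show density n S ≤ α / M
  unfold density
  set f := fun R : ℝ => (volume (S ∩ {x : EuclideanSpace ℝ (Fin n) | ∀ i, |x i| ≤ R})).toReal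
      / (2*R)^n with hfdef
  set h := fun R : ℝ => (α / M) * ((2*(R+c))^n / (2*R)^n) with hhdef
  have hfh : ∀ᶠ R in Filter.atTop, f R ≤ h R := by
    filter_upwards [Filter.eventually_gt_atTop (0:ℝ)] with R hR
    have hpow : (0:ℝ) < (2*R)^n := by positivity
    have := key R hR.le
    calc f R ≤ ((α / M) * (2*(R+c))^n) / (2*R)^n := by
          simp only [hfdef]
          gcongr
      _ = h R := by simp only [hhdef]; ring
  have h1 : Filter.Tendsto (fun R : ℝ => (1 + c/R)^n) Filter.atTop (nhds 1) := by
    have hb : Filter.Tendsto (fun R : ℝ => 1 + c/R) Filter.atTop (nhds (1 + 0)) :=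
      tendsto_const_nhds.add (Filter.Tendsto.const_div_atTop Filter.tendsto_id c)
    rw [add_zero] at hb
    simpa using hb.pow n
  have heq : ∀ᶠ R : ℝ in Filter.atTop,
      (1 + c/R)^n = (2*(R+c))^n / (2*R)^n := by
    filter_upwards [Filter.eventually_gt_atTop (0:ℝ)] with R hR
    rw [← div_pow]
    congr 1
    field_simp
  have hten : Filter.Tendsto h Filter.atTop (nhds ((α / M) * 1)) := by
    apply Filter.Tendsto.const_mul
    exact h1.congr' heq
  have hbdd : Filter.IsBoundedUnder (· ≤ ·) Filter.atTop h := hten.isBoundedUnder_le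
  have hcob : Filter.IsCoboundedUnder (· ≤ ·) Filter.atTop f := by
    apply Filter.isCoboundedUnder_le_of_eventually_le Filter.atTop (x := 0)
    filter_upwards [Filter.eventually_gt_atTop (0:ℝ)] with R hR
    have hpow : (0:ℝ) < (2*R)^n := by positivity
    positivity
  calc Filter.limsup f Filter.atTop ≤ Filter.limsup h Filter.atTop :=
        Filter.limsup_le_limsup hfh hcob hbdd
    _ = (α / M) * 1 := hten.limsup_eq
    _ = α / M := mul_one _
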